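/- Let (A, ∘, ρ, ⟨·,·⟩) be an irreducible Courant algebroid over ℝ and N a nonzero orthogonal (N* = −N) Courant-Nijenhuis tensor. Then N² = λ'I for some λ' ∈ ℝ, and consequently N is a positive scalar multiple of a tensor J with J² = −I, J² = I, or J² = 0 (a complex, product, or tangent Courant structure, respectively). -/
import Mathlib

private lemma half_smul_cancel' {F : Type*} [AddCommGroup F] [Module ℝ F] {a b : F}
    (h : (2:ℝ) • a = (2:ℝ) • b) : a = b := by
  have := congrArg (fun x => (2⁻¹ : ℝ) • x) h
  simpa [smul_smul] using this

/-- On an irreducible Courant algebroid over ℝ, a nonzero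
orthogonal (`N* = -N`) Courant-Nijenhuis tensor `N` satisfies `N² = λ'I` for
some `λ' ∈ ℝ`, and consequently `N` is a positive scalar multiple of a tensor
`J` with `J² = −I`, `J² = I`, or `J² = 0` (a complex, product, or tangent
Courant structure, respectively). -/
theorem orthogonal_nijenhuis_trichotomy
    {A F : Type*} [AddCommGroup A] [Module ℝ A] [AddCommGroup F] [Module ℝ F]
    (m : A →ₗ[ℝ] A →ₗ[ℝ] A)           -- the Leibniz product ∘
    (B : A →ₗ[ℝ] A →ₗ[ℝ] F)           -- the pairing ⟨·,·⟩
    (ρ : A →ₗ[ℝ] F →ₗ[ℝ] F)           -- the anchor acting on scalars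
    (jacobi : ∀ X Y Z : A, m (m X Y) Z = m X (m Y Z) - m Y (m X Z))
    (hsym : ∀ X Y : A, B X Y = B Y X)
    (hnondeg : ∀ a : A, (∀ b : A, B a b = 0) → a = 0)
    (h4 : ∀ X Y : A, ρ X (B Y Y) = (2 : ℝ) • B X (m Y Y))
    (h5 : ∀ X Y : A, ρ X (B Y Y) = (2 : ℝ) • B (m X Y) Y)
    -- irreducibility
    (hirr : ∀ Δ : A →ₗ[ℝ] A,
      (∀ X Z : A, m X (Δ Z) = Δ (m X Z)) → (∀ Y : A, Δ (m Y Y) = m (Δ Y) Y) →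
      ∃ c : ℝ, ∀ x : A, Δ x = c • x)
    -- N is a nonzero orthogonal Courant-Nijenhuis tensor
    (N : A →ₗ[ℝ] A) (hNne : N ≠ 0)
    (horth : ∀ X Y : A, B (N X) Y = - B X (N Y))
    (cN : A → A → A)
    (hcN : ∀ X Y : A, cN X Y = m (N X) Y + m X (N Y) - N (m X Y))
    (torsion_zero : ∀ X Y : A, m (N X) (N Y) - N (cN X Y) = 0) :
    ∃ lam' : ℝ, (∀ x : A, N (N x) = lam' • x) ∧
      ∃ c : ℝ, 0 < c ∧ ∃ J : A →ₗ[ℝ] A, N = c • J ∧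
        ((∀ x : A, J (J x) = -x) ∨ (∀ x : A, J (J x) = x) ∨
         (∀ x : A, J (J x) = 0)) := by
  -- polarized axiom h5
  have P5 : ∀ X Y Z : A, B (m X Y) Z + B (m X Z) Y = ρ X (B Y Z) := by
    intro X Y Z
    apply half_smul_cancel'
    have h := h5 X (Y + Z)
    have h1 := h5 X Y
    have h2 := h5 X Z
    have hs := congrArg (ρ X) (hsym Z Y)
    simp only [map_add, LinearMap.add_apply] at h
    linear_combination (norm := module) h1 + h2 + hs - h
  -- polarized axiom h4
  have P4 : ∀ X Y Z : A, B X (m Y Z) + B X (m Z Y) = ρ X (B Y Z) := by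
    intro X Y Z
    apply half_smul_cancel'
    have h := h4 X (Y + Z)
    have h1 := h4 X Y
    have h2 := h4 X Z
    have hs := congrArg (ρ X) (hsym Z Y)
    simp only [map_add, LinearMap.add_apply] at h
    linear_combination (norm := module) h1 + h2 + hs - h
  -- ⟨NY, Y⟩ = 0
  have hBN0 : ∀ Y : A, B (N Y) Y = 0 := by
    intro Y
    have h1 := horth Y Y
    have h2 := hsym Y (N Y)
    apply half_smul_cancel' (b := 0)
    rw [smul_zero]
    linear_combination (norm := module) h1 - h2
  -- symmetrized identity for the pairing: ⟨NY, W⟩ + ⟨NW, Y⟩ = 0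
  have hBNsym : ∀ Y W : A, B (N Y) W + B (N W) Y = 0 := by
    intro Y W
    have h1 := horth Y W
    have h2 := hsym Y (N W)
    linear_combination (norm := module) h1 - h2
  -- symmetric product with one N vanishes on the diagonal
  have S3 : ∀ Y : A, m (N Y) Y + m Y (N Y) = 0 := by
    intro Y
    apply hnondeg
    intro W
    rw [hsym]
    have h := P4 W (N Y) Y
    rw [hBN0 Y] at h
    simp only [map_add, map_zero, LinearMap.add_apply] at h ⊢
    linear_combination (norm := module) h
  -- the tensor H(X,Y) = X∘NY − N(X∘Y)
  set H : A → A → A := fun X Y => m X (N Y) - N (m X Y) with hH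
  -- H is antisymmetric in (Y, W) with respect to the pairing
  have Hanti : ∀ X Y W : A, B (H X Y) W = - B (H X W) Y := by
    intro X Y W
    have e1 := P5 X (N Y) W
    have e2 := P5 X (N W) Y
    have e3 := horth (m X Y) W
    have e4 := horth (m X W) Y
    have e6 := congrArg (ρ X) (hBNsym Y W)
    simp only [map_add, map_zero] at e6
    simp only [hH, map_sub, LinearMap.sub_apply]
    linear_combination (norm := module) e1 + e2 - e3 - e4 + e6
  -- torsion-freeness rephrased: H(NX, Y) = N (H X Y)
  have Htors : ∀ X Y : A, H (N X) Y = N (H X Y) := by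
    intro X Y
    have t := torsion_zero X Y
    rw [hcN] at t
    simp only [map_sub, map_add] at t
    simp only [hH, map_sub, map_add]
    linear_combination (norm := module) t
  -- key consequence: H(NX, Z) + H(X, NZ) = 0
  have Hsum : ∀ X Z : A, H (N X) Z + H X (N Z) = 0 := by
    intro X Z
    apply hnondeg
    intro Y
    have chain : B (H (N X) Z) Y = - B (H X (N Z)) Y := by
      calc B (H (N X) Z) Y = - B (H (N X) Y) Z := Hanti _ _ _
        _ = - B (N (H X Y)) Z := by rw [Htors]
        _ = B (H X Y) (N Z) := by rw [horth, neg_neg]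
        _ = - B (H X (N Z)) Y := Hanti _ _ _
    simp only [map_add, LinearMap.add_apply]
    linear_combination (norm := module) chain
  -- hence N² commutes with left multiplication
  have PhiZero : ∀ X Z : A, m X (N (N Z)) = N (N (m X Z)) := by
    intro X Z
    have h1 := Hsum X Z
    rw [Htors X Z] at h1
    simp only [hH, map_sub, map_add] at h1
    linear_combination (norm := module) h1
  -- diagonal torsion: NY ∘ NY = −N²(Y∘Y)
  have mNYNY : ∀ Y : A, m (N Y) (N Y) = - N (N (m Y Y)) := by
    intro Y
    have t := torsion_zero Y Y
    rw [hcN] at t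
    have s := congrArg N (S3 Y)
    simp only [map_add, map_zero] at s
    simp only [map_sub, map_add] at t
    linear_combination (norm := module) t + s
  -- N² also commutes with squares on the right
  have Cond2 : ∀ Y : A, N (N (m Y Y)) = m (N (N Y)) Y := by
    intro Y
    have key : ∀ W : A, B W (m (N (N Y)) Y) = B W (N (N (m Y Y))) := by
      intro W
      have e1 := P4 W (N (N Y)) Y
      have e2 := congrArg (ρ W) (horth (N Y) Y)
      simp only [map_neg] at e2
      have e3 := h4 W (N Y)
      have e4 := congrArg (B W) (mNYNY Y)
      simp only [map_neg] at e4
      have e5 := congrArg (B W) (PhiZero Y Y)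
      linear_combination (norm := module) e1 + e2 - e3 - (2:ℝ) • e4 - e5
    have key2 : ∀ b : A, B (m (N (N Y)) Y - N (N (m Y Y))) b = 0 := by
      intro b
      rw [map_sub, LinearMap.sub_apply, hsym (m (N (N Y)) Y) b,
        hsym (N (N (m Y Y))) b, key b, sub_self]
    have h0 := hnondeg _ key2
    have h1 := sub_eq_zero.mp h0
    exact h1.symm
  -- apply irreducibility to Δ = N²
  obtain ⟨lam', hlam⟩ := hirr (N.comp N)
    (fun X Z => by simpa using PhiZero X Z)
    (fun Y => by simpa using Cond2 Y)
  have hlamN : ∀ x : A, N (N x) = lam' • x := fun x => by simpa using hlam x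
  refine ⟨lam', hlamN, ?_⟩
  rcases lt_trichotomy lam' 0 with h | h | h
  · -- complex structure
    set c : ℝ := Real.sqrt (-lam') with hc
    have hcpos : 0 < c := Real.sqrt_pos.mpr (by linarith)
    have hcc : c * c = -lam' := Real.mul_self_sqrt (by linarith)
    refine ⟨c, hcpos, c⁻¹ • N, ?_, Or.inl fun x => ?_⟩
    · rw [smul_smul, mul_inv_cancel₀ hcpos.ne', one_smul]
    · have hscal : c⁻¹ * (c⁻¹ * lam') = -1 := by
        field_simp
        nlinarith [hcc]
      simp only [LinearMap.smul_apply, map_smul, hlamN, smul_smul, hscal, neg_one_smul]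
  · -- tangent structure
    refine ⟨1, one_pos, N, (one_smul ℝ N).symm, Or.inr (Or.inr fun x => ?_)⟩
    rw [hlamN, h, zero_smul]
  · -- product structure
    set c : ℝ := Real.sqrt lam' with hc
    have hcpos : 0 < c := Real.sqrt_pos.mpr h
    have hcc : c * c = lam' := Real.mul_self_sqrt h.le
    refine ⟨c, hcpos, c⁻¹ • N, ?_, Or.inr (Or.inl fun x => ?_)⟩
    · rw [smul_smul, mul_inv_cancel₀ hcpos.ne', one_smul]
    · have hscal : c⁻¹ * (c⁻¹ * lam') = 1 := by
        field_simp
        nlinarith [hcc]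
      simp only [LinearMap.smul_apply, map_smul, hlamN, smul_smul, hscal, one_smul]
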